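/- Let N ≥ 1 and α ∈ [π/2, π]. If there exists x : (Fin N → Fin 3) → ℝ with all entries nonnegative, x ≠ 0, and A_α^{⊗N} x = 0, then α ≥ π/2 + π/(2N). Equivalently, for every α ∈ [π/2, π/2 + π/(2N)), the only nonnegative real solution of A_α^{⊗N} x = 0 is x = 0. -/

import Mathlib

open Complex Real Finset

/-- The matrix `A_α` with rows `(1, e^{iα}, 0)` and `(0, 1, e^{iα})`. -/
noncomputable def Amat (α : ℝ) : Matrix (Fin 2) (Fin 3) ℂ :=
  !![1, Complex.exp (α * Complex.I), 0;
     0, 1, Complex.exp (α * Complex.I)]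

/-- Necessity: if `A_α^{⊗N} x = 0` has a nontrivial nonnegative solution with
`α ∈ [π/2, π]`, then `α ≥ π/2 + π/(2N)`. -/
theorem nns_necessity (N : ℕ) (hN : 1 ≤ N) (α : ℝ) (hα : α ∈ Set.Icc (π / 2) π)
    (x : (Fin N → Fin 3) → ℝ) (hx0 : ∀ L, 0 ≤ x L) (hxne : x ≠ 0)
    (hx : ∀ J : Fin N → Fin 2,
      ∑ L : Fin N → Fin 3, (x L : ℂ) * ∏ p : Fin N, Amat α (J p) (L p) = 0) :
    π / 2 + π / (2 * N) ≤ α := by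
  by_contra hcon
  push_neg at hcon
  obtain ⟨hα1, hα2⟩ := hα
  have hπ := Real.pi_pos
  have hN1 : (1:ℝ) ≤ (N:ℝ) := by exact_mod_cast hN
  have hNpos : (0:ℝ) < N := by linarith
  have heq2 : 2*(π/(2*(N:ℝ))) = π/(N:ℝ) := by ring
  have hπN2 : 0 < π/(2*(N:ℝ)) := by positivity
  have hπNle : π/(2*(N:ℝ)) ≤ π/2 :=
    div_le_div_of_nonneg_left hπ.le (by norm_num) (by linarith)
  have hαπ : α < π := by linarith
  -- choose the angle φ
  obtain ⟨φ, hφgt, hφltα, hφltπN⟩ :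
      ∃ φ : ℝ, 2*α - π < φ ∧ φ < α ∧ φ < π/(N:ℝ) := by
    refine ⟨((2*α - π) + min α (π/(N:ℝ))) / 2, ?_, ?_, ?_⟩
    · have h1 : 2*α - π < α := by linarith
      have h2 : 2*α - π < π/(N:ℝ) := by linarith
      have := lt_min h1 h2
      linarith
    · have h1 : min α (π/(N:ℝ)) ≤ α := min_le_left _ _
      linarith
    · have h1 : min α (π/(N:ℝ)) ≤ π/(N:ℝ) := min_le_right _ _
      linarith
  have hφpos : 0 < φ := by linarith
  have hNφ : (N:ℝ) * φ < π := by
    have h1 : (N:ℝ) * φ < (N:ℝ) * (π/(N:ℝ)) := mul_lt_mul_of_pos_left hφltπN hNpos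
    have h2 : (N:ℝ) * (π/(N:ℝ)) = π := by field_simp
    linarith
  -- the magnitudes r, s
  obtain ⟨r, s, hr, hs, hmain⟩ :
      ∃ r s : ℝ, 0 < r ∧ 0 < s ∧
        Complex.exp ((α:ℂ) * Complex.I)
          + (r:ℂ) * Complex.exp (((φ - α : ℝ):ℂ) * Complex.I) = (s:ℂ) := by
    have hsαφ : 0 < Real.sin (α - φ) :=
      Real.sin_pos_of_pos_of_lt_pi (by linarith) (by linarith)
    have hs2 : 0 < Real.sin (2*α - φ) :=
      Real.sin_pos_of_pos_of_lt_pi (by linarith) (by linarith)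
    have hsα : 0 < Real.sin α := Real.sin_pos_of_pos_of_lt_pi (by linarith) hαπ
    refine ⟨Real.sin α / Real.sin (α - φ), Real.sin (2*α - φ) / Real.sin (α - φ),
      div_pos hsα hsαφ, div_pos hs2 hsαφ, ?_⟩
    rw [Complex.ext_iff]
    constructor
    · simp only [Complex.add_re, Complex.mul_re, Complex.ofReal_re, Complex.ofReal_im,
        Complex.exp_ofReal_mul_I_re, Complex.exp_ofReal_mul_I_im, zero_mul, sub_zero]
      rw [show 2*α - φ = (α - φ) + α by ring, Real.sin_add,
          show φ - α = -(α - φ) by ring, Real.cos_neg]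
      field_simp
    · simp only [Complex.add_im, Complex.mul_im, Complex.ofReal_re, Complex.ofReal_im,
        Complex.exp_ofReal_mul_I_re, Complex.exp_ofReal_mul_I_im, zero_mul, add_zero]
      rw [show φ - α = -(α - φ) by ring, Real.sin_neg]
      field_simp
      ring
  -- the dual vector
  set c : Fin 2 → ℂ := ![1, (r:ℂ) * Complex.exp (((φ - α : ℝ):ℂ) * Complex.I)] with hcdef
  set b : Fin 3 → ℂ := fun j => ∑ i : Fin 2, c i * Amat α i j with hbdef
  have hb0 : b 0 = 1 := by
    simp [hbdef, hcdef, Amat, Fin.sum_univ_two]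
  have hb1 : b 1 = (s:ℂ) := by
    have h1 : b 1 = Complex.exp ((α:ℂ) * Complex.I)
        + (r:ℂ) * Complex.exp (((φ - α : ℝ):ℂ) * Complex.I) := by
      simp [hbdef, hcdef, Amat, Fin.sum_univ_two]
    rw [h1, hmain]
  have hb2 : b 2 = (r:ℂ) * Complex.exp (((φ:ℝ):ℂ) * Complex.I) := by
    have h1 : b 2 = (r:ℂ) * Complex.exp (((φ - α : ℝ):ℂ) * Complex.I)
        * Complex.exp ((α:ℂ) * Complex.I) := by
      simp [hbdef, hcdef, Amat, Fin.sum_univ_two]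
    rw [h1, mul_assoc, ← Complex.exp_add]
    congr 2
    push_cast
    ring
  -- polar data
  set ρ : Fin 3 → ℝ := ![1, s, r] with hρdef
  set θv : Fin 3 → ℝ := ![0, 0, φ] with hθdef
  have hρpos : ∀ j, 0 < ρ j := by
    intro j
    fin_cases j
    · show (0:ℝ) < ρ 0; norm_num [hρdef]
    · show (0:ℝ) < ρ 1; simpa [hρdef] using hs
    · show (0:ℝ) < ρ 2; simpa [hρdef] using hr
  have hθ0 : ∀ j, 0 ≤ θv j := by
    intro j
    fin_cases j
    · show (0:ℝ) ≤ θv 0; norm_num [hθdef]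
    · show (0:ℝ) ≤ θv 1; norm_num [hθdef]
    · show (0:ℝ) ≤ θv 2; simpa [hθdef] using hφpos.le
  have hθφ : ∀ j, θv j ≤ φ := by
    intro j
    fin_cases j
    · show θv 0 ≤ φ; simpa [hθdef] using hφpos.le
    · show θv 1 ≤ φ; simpa [hθdef] using hφpos.le
    · show θv 2 ≤ φ; simp [hθdef]
  have hbj : ∀ j, b j = ((ρ j : ℝ):ℂ) * Complex.exp (((θv j : ℝ):ℂ) * Complex.I) := by
    intro j
    fin_cases j
    · show b 0 = ((ρ 0 : ℝ):ℂ) * Complex.exp (((θv 0 : ℝ):ℂ) * Complex.I)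
      rw [hb0]; norm_num [hρdef, hθdef]
    · show b 1 = ((ρ 1 : ℝ):ℂ) * Complex.exp (((θv 1 : ℝ):ℂ) * Complex.I)
      rw [hb1]; norm_num [hρdef, hθdef]
    · show b 2 = ((ρ 2 : ℝ):ℂ) * Complex.exp (((θv 2 : ℝ):ℂ) * Complex.I)
      rw [hb2]; rfl
  -- main vanishing sum
  have hS : ∑ L : Fin N → Fin 3, (x L : ℂ) * ∏ p : Fin N, b (L p) = 0 := by
    have hprod : ∀ L : Fin N → Fin 3, (∏ p : Fin N, b (L p))
        = ∑ J : Fin N → Fin 2, ∏ p : Fin N, (c (J p) * Amat α (J p) (L p)) := by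
      intro L
      have h1 : (∏ p : Fin N, b (L p))
          = ∏ p : Fin N, ∑ i : Fin 2, c i * Amat α i (L p) := rfl
      rw [h1, Fintype.prod_sum]
    have expand : ∀ L : Fin N → Fin 3, (x L : ℂ) * ∏ p : Fin N, b (L p)
        = ∑ J : Fin N → Fin 2,
            (∏ p : Fin N, c (J p)) * ((x L : ℂ) * ∏ p : Fin N, Amat α (J p) (L p)) := by
      intro L
      rw [hprod L, Finset.mul_sum]
      refine Finset.sum_congr rfl fun J _ => ?_
      rw [Finset.prod_mul_distrib]
      ring
    rw [Finset.sum_congr rfl fun L _ => expand L, Finset.sum_comm]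
    refine Finset.sum_eq_zero fun J _ => ?_
    rw [← Finset.mul_sum, hx J, mul_zero]
  -- rewrite in polar form
  set γ : ℝ := (N:ℝ) * φ / 2 with hγdef
  set T : (Fin N → Fin 3) → ℝ := fun L => ∑ p : Fin N, θv (L p) with hTdef
  set P : (Fin N → Fin 3) → ℝ := fun L => ∏ p : Fin N, ρ (L p) with hPdef
  have hP : ∀ L, 0 < P L := fun L => Finset.prod_pos fun p _ => hρpos _
  have hT0 : ∀ L, 0 ≤ T L := fun L => Finset.sum_nonneg fun p _ => hθ0 _
  have hTN : ∀ L, T L ≤ (N:ℝ) * φ := by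
    intro L
    calc T L ≤ ∑ _p : Fin N, φ := Finset.sum_le_sum fun p _ => hθφ _
    _ = (N:ℝ) * φ := by
        rw [Finset.sum_const, Finset.card_univ, Fintype.card_fin, nsmul_eq_mul]
  have hγlt : γ < π/2 := by rw [hγdef]; linarith
  have hcos : ∀ L, 0 < Real.cos (T L - γ) := by
    intro L
    apply Real.cos_pos_of_mem_Ioo
    constructor
    · have h1 := hT0 L
      have h2 : 0 ≤ γ := by rw [hγdef]; positivity
      linarith
    · nlinarith [hTN L, hT0 L]
  have hprodpolar : ∀ L : Fin N → Fin 3,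
      (∏ p : Fin N, b (L p)) = ((P L : ℝ):ℂ) * Complex.exp (((T L : ℝ):ℂ) * Complex.I) := by
    intro L
    calc (∏ p : Fin N, b (L p))
        = ∏ p : Fin N, (((ρ (L p) : ℝ):ℂ) * Complex.exp (((θv (L p) : ℝ):ℂ) * Complex.I)) :=
          Finset.prod_congr rfl fun p _ => hbj (L p)
      _ = (∏ p : Fin N, ((ρ (L p) : ℝ):ℂ))
            * ∏ p : Fin N, Complex.exp (((θv (L p) : ℝ):ℂ) * Complex.I) :=
          Finset.prod_mul_distrib
      _ = ((P L : ℝ):ℂ) * Complex.exp (((T L : ℝ):ℂ) * Complex.I) := by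
          rw [← Complex.exp_sum]
          congr 1
          · rw [hPdef]; push_cast; ring
          · congr 1
            rw [hTdef]
            push_cast
            rw [Finset.sum_mul]
  have hS2 : ∑ L : Fin N → Fin 3,
      (x L : ℂ) * (((P L : ℝ):ℂ) * Complex.exp ((((T L - γ) : ℝ):ℂ) * Complex.I)) = 0 := by
    have hterm : ∀ L : Fin N → Fin 3,
        (x L : ℂ) * (((P L : ℝ):ℂ) * Complex.exp ((((T L - γ) : ℝ):ℂ) * Complex.I))
        = ((x L : ℂ) * ∏ p : Fin N, b (L p)) * Complex.exp (((-γ : ℝ):ℂ) * Complex.I) := by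
      intro L
      rw [hprodpolar L, mul_assoc, mul_assoc, ← Complex.exp_add]
      congr 2
      push_cast
      ring
    rw [Finset.sum_congr rfl fun L _ => hterm L, ← Finset.sum_mul, hS, zero_mul]
  have hS3 : ∑ L : Fin N → Fin 3, x L * P L * Real.cos (T L - γ) = 0 := by
    have h1 := congrArg Complex.re hS2
    rw [Complex.re_sum, Complex.zero_re] at h1
    rw [← h1]
    refine Finset.sum_congr rfl fun L _ => ?_
    simp only [Complex.mul_re, Complex.ofReal_re, Complex.ofReal_im,
      Complex.exp_ofReal_mul_I_re, Complex.exp_ofReal_mul_I_im, zero_mul, sub_zero, mul_zero]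
    ring
  have hall : ∀ L ∈ (Finset.univ : Finset (Fin N → Fin 3)),
      x L * P L * Real.cos (T L - γ) = 0 := by
    rw [← Finset.sum_eq_zero_iff_of_nonneg]
    · exact hS3
    · intro L _
      exact mul_nonneg (mul_nonneg (hx0 L) (hP L).le) (hcos L).le
  apply hxne
  funext L
  have h0 := hall L (Finset.mem_univ L)
  have hne : P L * Real.cos (T L - γ) ≠ 0 := (mul_pos (hP L) (hcos L)).ne'
  have h1 : x L * (P L * Real.cos (T L - γ)) = 0 := by linarith
  simpa using (mul_eq_zero.mp h1).resolve_right hne
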